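/- Let $n = \dim X$, $d \ge 1$ an integer and $r$ a rational number with $r > n - 3 \ge 0$. Suppose $p(t)$ is a polynomial of degree $n$ over $\mathbb{Q}$ satisfying: $p(0) = 1$, $p(-j) = 0$ for $1 \le j \le n-3$, the leading coefficient is $d/n!$, the coefficient of $t^{n-1}$ is $(\beta + dr)/(2(n-1)!)$ with $\beta \ge 0$, and $(-1)^n p(-n+2) \ge 0$. Then $p(1) = n - 1 + (-1)^n p(-n+2) + \frac{\beta + d(r - n + 3)}{2}$. -/

import Mathlib

open Polynomial Finset fwdDiff

private lemma comp_coeff (f : ℚ[X]) (N j : ℕ) (hf : f.natDegree < N) :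
    (f.comp (X + 1)).coeff j = ∑ i ∈ Finset.range N, f.coeff i * (i.choose j : ℚ) := by
  conv_lhs => rw [f.as_sum_range' N hf]
  rw [Polynomial.sum_comp, finset_sum_coeff]
  refine Finset.sum_congr rfl fun i _ => ?_
  rw [monomial_comp, coeff_C_mul, coeff_X_add_one_pow]

private lemma keyE : ∀ (m : ℕ) (f : ℚ[X]), f.natDegree ≤ m + 1 → ∀ y : ℚ,
    2 * ((fwdDiff (1:ℚ))^[m] (fun x => f.eval x) y)
      = f.coeff (m+1) * ((m+1).factorial : ℚ) * (2*y + m) + 2 * f.coeff m * (m.factorial : ℚ) := by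
  intro m
  induction m with
  | zero =>
    intro f hf y
    simp only [Function.iterate_zero, id_eq]
    rw [eval_eq_sum_range' (n := 2) (by omega) y, Finset.sum_range_succ, Finset.sum_range_succ]
    norm_num
    ring
  | succ m IH =>
    intro f hf y
    set q : ℚ[X] := f.comp (X + 1) - f with hq
    have hcoeff : ∀ j, q.coeff j = (∑ i ∈ Finset.range (m + 3), f.coeff i * (i.choose j : ℚ))
        - f.coeff j := by
      intro j
      rw [hq, coeff_sub, comp_coeff f (m+3) j (by omega)]
    have hfc : ∀ i, m + 2 < i → f.coeff i = 0 := fun i hi =>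
      coeff_eq_zero_of_natDegree_lt (by omega)
    -- split the range sum: range (m+3) = range m ++ {m, m+1, m+2}
    have hsplit : ∀ j, (∑ i ∈ Finset.range (m + 3), f.coeff i * (i.choose j : ℚ))
        = (∑ i ∈ Finset.range m, f.coeff i * (i.choose j : ℚ))
          + f.coeff m * (m.choose j : ℚ) + f.coeff (m+1) * ((m+1).choose j : ℚ)
          + f.coeff (m+2) * ((m+2).choose j : ℚ) := by
      intro j
      rw [show m + 3 = (m + 2) + 1 from rfl, Finset.sum_range_succ, Finset.sum_range_succ,
        Finset.sum_range_succ]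
    have hvanish : ∀ j, m ≤ j → (∑ i ∈ Finset.range m, f.coeff i * (i.choose j : ℚ)) = 0 := by
      intro j hj
      refine Finset.sum_eq_zero fun i hi => ?_
      rw [Nat.choose_eq_zero_of_lt (lt_of_lt_of_le (Finset.mem_range.mp hi) hj)]
      simp
    have hqdeg : q.natDegree ≤ m + 1 := by
      rw [natDegree_le_iff_coeff_eq_zero]
      intro N hN
      rw [hcoeff, hsplit, hvanish N (by omega)]
      rcases eq_or_lt_of_le (show m + 2 ≤ N by omega) with h | h
      · rw [← h]
        rw [Nat.choose_eq_zero_of_lt (by omega), Nat.choose_eq_zero_of_lt (by omega),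
          Nat.choose_self]
        simp
      · rw [Nat.choose_eq_zero_of_lt (by omega), Nat.choose_eq_zero_of_lt (by omega),
          Nat.choose_eq_zero_of_lt (by omega), hfc N (by omega)]
        simp
    have hq1 : q.coeff (m + 1) = ((m:ℚ) + 2) * f.coeff (m + 2) := by
      rw [hcoeff, hsplit, hvanish (m+1) (by omega), Nat.choose_eq_zero_of_lt (by omega),
        Nat.choose_self, Nat.choose_succ_self_right]
      push_cast
      ring
    have hq0 : q.coeff m = ((m:ℚ) + 1) * f.coeff (m + 1)
        + ((m:ℚ) + 2) * ((m:ℚ) + 1) / 2 * f.coeff (m + 2) := by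
      rw [hcoeff, hsplit, hvanish m (le_refl m), Nat.choose_self, Nat.choose_succ_self_right,
        show (m+2).choose m = (m+2).choose 2 by
          rw [← Nat.choose_symm (by omega : m ≤ m + 2)]; congr 1; omega,
        Nat.choose_two_right]
      have : (((m + 2) * (m + 2 - 1) / 2 : ℕ) : ℚ) = ((m:ℚ) + 2) * ((m:ℚ) + 1) / 2 := by
        rw [show m + 2 - 1 = m + 1 from rfl]
        rw [Nat.cast_div_charZero]
        · push_cast; ring
        · exact Nat.even_mul_succ_self (m+1) |>.two_dvd.trans (dvd_of_eq (by ring))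
      rw [this]
      push_cast
      ring
    have hstep : fwdDiff (1:ℚ) (fun x => f.eval x) = fun x => q.eval x := by
      funext x
      simp [fwdDiff, hq, eval_comp]
    rw [Function.iterate_succ_apply, hstep, IH q hqdeg y, hq1, hq0]
    have h1 : (((m+1+1).factorial : ℕ) : ℚ) = ((m:ℚ) + 2) * ((m+1).factorial : ℚ) := by
      rw [Nat.factorial_succ]; push_cast; ring
    have h2 : (((m+1).factorial : ℕ) : ℚ) = ((m:ℚ) + 1) * (m.factorial : ℚ) := by
      rw [Nat.factorial_succ]; push_cast; ring
    rw [h1, h2]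
    push_cast
    ring


/-- The exact identity from Ambro's lemma: for a degree-`n` rational polynomial
`p` with `p 0 = 1`, `p (-j) = 0` for `1 ≤ j ≤ n - 3`, leading coefficient
`d / n!` and coefficient of `t^(n-1)` equal to `(β + d r)/(2 (n-1)!)`
(`d ≥ 1` integer, `β ≥ 0`, `r > n - 3 ≥ 0`), with `(-1)^n p (-n+2) ≥ 0`,
one has `p 1 = n - 1 + (-1)^n p (-n+2) + (β + d (r - n + 3))/2`. -/
theorem stmt10 (n : ℕ) (hn : 3 ≤ n) (p : Polynomial ℚ) (d : ℤ) (β r : ℚ)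
    (hdeg : p.natDegree = n)
    (hp0 : p.eval 0 = 1)
    (hvan : ∀ j : ℕ, 1 ≤ j → j ≤ n - 3 → p.eval (-(j : ℚ)) = 0)
    (hlead : p.coeff n = (d : ℚ) / (Nat.factorial n))
    (hcoeff : p.coeff (n - 1) = (β + (d : ℚ) * r) / (2 * (Nat.factorial (n - 1))))
    (hd : 1 ≤ d) (hβ : 0 ≤ β) (hr : r > (n : ℚ) - 3)
    (hpos : 0 ≤ (-1 : ℚ) ^ n * p.eval (-(n : ℚ) + 2)) :
    p.eval 1 = (n : ℚ) - 1 + (-1 : ℚ) ^ n * p.eval (-(n : ℚ) + 2)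
      + (β + (d : ℚ) * (r - (n : ℚ) + 3)) / 2 := by
  obtain ⟨m, rfl⟩ : ∃ m, n = m + 3 := ⟨n - 3, by omega⟩
  set y : ℚ := -((m + 3 : ℕ) : ℚ) + 2 with hy
  have hcoeff' : p.coeff (m + 2) = (β + (d : ℚ) * r) / (2 * (Nat.factorial (m + 2))) := by
    simpa using hcoeff
  have hE := keyE (m + 2) p (by omega) y
  have hS := fwdDiff_iter_eq_sum_shift (1 : ℚ) (fun x => p.eval x) (m + 2) y
  -- compute the sum
  have hsum : ∑ k ∈ Finset.range (m + 2 + 1),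
      ((-1 : ℤ) ^ (m + 2 - k) * ((m + 2).choose k)) • p.eval (y + k • (1 : ℚ))
      = (-1 : ℚ) ^ (m + 2) * p.eval y - ((m : ℚ) + 2) + p.eval 1 := by
    rw [Finset.sum_range_succ, Finset.sum_range_succ]
    have h1 : ∑ k ∈ Finset.range (m + 1),
        ((-1 : ℤ) ^ (m + 2 - k) * ((m + 2).choose k)) • p.eval (y + k • (1 : ℚ))
        = (-1 : ℚ) ^ (m + 2) * p.eval y := by
      rw [Finset.sum_eq_single_of_mem 0 (Finset.mem_range.mpr (by omega))]
      · simp [zsmul_eq_mul]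
      · intro k hk hk0
        have hk' := Finset.mem_range.mp hk
        have hev : p.eval (y + k • (1 : ℚ)) = 0 := by
          have : y + k • (1 : ℚ) = -(((m + 1 - k : ℕ) : ℚ)) := by
            rw [hy]
            push_cast [Nat.cast_sub (by omega : k ≤ m + 1)]
            ring
          rw [this]
          exact hvan (m + 1 - k) (by omega) (by omega)
        rw [hev, smul_zero]
    rw [h1]
    have h2 : y + (m + 1 : ℕ) • (1 : ℚ) = 0 := by rw [hy]; push_cast; ring
    have h3 : y + (m + 2 : ℕ) • (1 : ℚ) = 1 := by rw [hy]; push_cast; ring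
    rw [h2, h3, hp0]
    have h4 : m + 2 - (m + 1) = 1 := by omega
    have h5 : m + 2 - (m + 2) = 0 := by omega
    rw [h4, h5, Nat.choose_succ_self_right, Nat.choose_self]
    push_cast [zsmul_eq_mul]
    ring
  rw [hS, hsum] at hE
  have hfac3 : ((Nat.factorial (m + 3) : ℕ) : ℚ) ≠ 0 :=
    Nat.cast_ne_zero.mpr (Nat.factorial_ne_zero _)
  have hfac2 : ((Nat.factorial (m + 2) : ℕ) : ℚ) ≠ 0 :=
    Nat.cast_ne_zero.mpr (Nat.factorial_ne_zero _)
  rw [hlead, hcoeff'] at hE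
  have key2 : 2 * ((-1 : ℚ) ^ (m + 2) * p.eval y - ((m : ℚ) + 2) + p.eval 1)
      = (d : ℚ) * (2 * y + ((m : ℚ) + 2)) + (β + (d : ℚ) * r) := by
    rw [hE]
    field_simp
    push_cast; ring
  have hsign : (-1 : ℚ) ^ (m + 3) = -((-1 : ℚ) ^ (m + 2)) := by
    rw [show m + 3 = (m + 2) + 1 by omega, pow_succ]; ring
  rw [hsign]
  have hyy : y = -(m : ℚ) - 1 := by rw [hy]; push_cast; ring
  push_cast
  linear_combination key2 / 2 + (d : ℚ) * hyy
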